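/- Let T be a tree in the class 𝕋 (every non-pendant vertex of T is adjacent to at least one pendant vertex, and T has at least one non-pendant vertex). Then no non-pendant edge of T belongs to any maximum matching of T. -/
import Mathlib


open SimpleGraph

/-- `X` is the group inverse of `A`. -/
def IsGroupInverse {n : Type*} [Fintype n] (A X : Matrix n n ℝ) : Prop :=
  A * X * A = A ∧ X * A * X = X ∧ A * X = X * A

/-- A matching of a graph: a set of pairwise non-incident edges. -/
def IsMatching {V : Type*} (G : SimpleGraph V) (M : Finset (Sym2 V)) : Prop :=
  (↑M : Set (Sym2 V)) ⊆ G.edgeSet ∧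
    ∀ e ∈ M, ∀ f ∈ M, e ≠ f → ∀ v : V, ¬(v ∈ e ∧ v ∈ f)

/-- A maximum matching: a matching of maximum cardinality. -/
def IsMaxMatching {V : Type*} (G : SimpleGraph V) (M : Finset (Sym2 V)) : Prop :=
  IsMatching G M ∧ ∀ N : Finset (Sym2 V), IsMatching G N → N.card ≤ M.card

/-- A nonempty list of edges alternately in and out of `M`,
beginning and ending with edges of `M`. -/
def IsAltEdgeList {V : Type*} (M : Set (Sym2 V)) : List (Sym2 V) → Prop
  | [] => False
  | [e] => e ∈ M
  | e :: f :: rest => e ∈ M ∧ f ∉ M ∧ IsAltEdgeList M rest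

/-- A pair of vertices is maximally matchable if they are joined by a path that is
alternating with respect to some maximum matching. -/
def MaxMatchable {V : Type*} (G : SimpleGraph V) (u v : V) : Prop :=
  ∃ (p : G.Walk u v) (M : Finset (Sym2 V)),
    p.IsPath ∧ IsMaxMatching G M ∧ IsAltEdgeList (↑M) p.edges

/-- `G` is a star: some center `c` is adjacent to exactly the other vertices,
and there are no other edges. -/
def IsStar {V : Type*} (G : SimpleGraph V) : Prop :=
  ∃ c : V, ∀ u v : V, G.Adj u v ↔ ((u = c ∧ v ≠ c) ∨ (v = c ∧ u ≠ c))

/-- The class 𝕋: trees with at least one non-pendant vertex in which every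
non-pendant vertex is adjacent to a pendant vertex. -/
def InClassT {V : Type*} [Fintype V] (T : SimpleGraph V) [DecidableRel T.Adj] : Prop :=
  T.IsTree ∧ (∃ v, T.degree v ≠ 1) ∧
    ∀ v, T.degree v ≠ 1 → ∃ u, T.Adj v u ∧ T.degree u = 1

/-- The number of pendant neighbours of `v`. -/
def pendantNbrs {V : Type*} [Fintype V] [DecidableEq V] (T : SimpleGraph V)
    [DecidableRel T.Adj] (v : V) : ℕ :=
  ((T.neighborFinset v).filter fun u => T.degree u = 1).card

/-- In a tree of class 𝕋, no non-pendant edge belongs to any maximum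
matching, i.e. every edge of a maximum matching is a pendant edge. -/
lemma pendant_unique {V : Type*} [Fintype V] (T : SimpleGraph V) [DecidableRel T.Adj]
    {w x y : V} (hw : T.degree w = 1) (hx : T.Adj w x) (hy : T.Adj w y) : x = y := by
  have h : (T.neighborFinset w).card ≤ 1 := le_of_eq hw
  exact Finset.card_le_one.mp h x ((T.mem_neighborFinset w x).mpr hx)
    y ((T.mem_neighborFinset w y).mpr hy)

theorem classT_matching_edges_pendant {V : Type*} [Fintype V]
    (T : SimpleGraph V) [DecidableRel T.Adj] (hT : InClassT T) :
    ∀ M : Finset (Sym2 V), IsMaxMatching T M →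
      ∀ e ∈ M, ∃ v ∈ e, T.degree v = 1 := by
  classical
  obtain ⟨hTree, -, hpend⟩ := hT
  intro M hM e he
  by_contra hcon
  push_neg at hcon
  have heE : e ∈ T.edgeSet := hM.1.1 he
  revert he heE hcon
  induction e using Sym2.ind with
  | _ u v =>
  intro he hcon heE
  have huv : T.Adj u v := heE
  have hu1 : T.degree u ≠ 1 := hcon u (Sym2.mem_mk_left u v)
  have hv1 : T.degree v ≠ 1 := hcon v (Sym2.mem_mk_right u v)
  obtain ⟨p, hup, hp1⟩ := hpend u hu1
  obtain ⟨q, hvq, hq1⟩ := hpend v hv1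
  have hpu : T.Adj p u := hup.symm
  have hqv : T.Adj q v := hvq.symm
  have hne_uv : u ≠ v := huv.ne
  have hpv : p ≠ v := fun h => hv1 (h ▸ hp1)
  have hqu : q ≠ u := fun h => hu1 (h ▸ hq1)
  have hpu' : p ≠ u := hpu.ne
  have hqv' : q ≠ v := hqv.ne
  have hpq : p ≠ q := by
    intro h; subst h
    exact hne_uv (pendant_unique T hp1 hpu hqv)
  -- no edge of M contains p
  have hMp : ∀ f ∈ M, p ∉ f := by
    intro f hf hpf
    obtain ⟨x, hx⟩ := Sym2.mem_iff_exists.mp hpf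
    subst hx
    have hfE : T.Adj p x := hM.1.1 hf
    have hxu : u = x := (pendant_unique T hp1 hfE hpu).symm
    subst hxu
    have hne : s(p, u) ≠ s(u, v) := by
      intro h
      rw [Sym2.eq_iff] at h
      rcases h with ⟨h1, -⟩ | ⟨h2, -⟩
      · exact hpu' h1
      · exact hpv h2
    exact hM.1.2 _ hf _ he hne u ⟨Sym2.mem_mk_right p u, Sym2.mem_mk_left u v⟩
  have hMq : ∀ f ∈ M, q ∉ f := by
    intro f hf hqf
    obtain ⟨x, hx⟩ := Sym2.mem_iff_exists.mp hqf
    subst hx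
    have hfE : T.Adj q x := hM.1.1 hf
    have hxv : v = x := (pendant_unique T hq1 hfE hqv).symm
    subst hxv
    have hne : s(q, v) ≠ s(u, v) := by
      intro h
      rw [Sym2.eq_iff] at h
      rcases h with ⟨h1, -⟩ | ⟨h1, -⟩
      · exact hqu h1
      · exact hqv' h1
    exact hM.1.2 _ hf _ he hne v ⟨Sym2.mem_mk_right q v, Sym2.mem_mk_right u v⟩
  set N : Finset (Sym2 V) := insert s(u, p) (insert s(v, q) (M.erase s(u, v))) with hN
  have hnotin1 : s(v, q) ∉ M.erase s(u, v) := by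
    intro h
    exact hMq _ (Finset.mem_of_mem_erase h) (Sym2.mem_mk_right v q)
  have hnotin2 : s(u, p) ∉ insert s(v, q) (M.erase s(u, v)) := by
    intro h
    rcases Finset.mem_insert.mp h with h | h
    · have : p ∈ s(v, q) := h ▸ Sym2.mem_mk_right u p
      rw [Sym2.mem_iff] at this
      rcases this with h' | h'
      · exact hpv h'
      · exact hpq h'
    · exact hMp _ (Finset.mem_of_mem_erase h) (Sym2.mem_mk_right u p)
  have hcard : N.card = M.card + 1 := by
    have h1 : 1 ≤ M.card := Finset.card_pos.mpr ⟨_, he⟩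
    rw [hN, Finset.card_insert_of_notMem hnotin2, Finset.card_insert_of_notMem hnotin1,
      Finset.card_erase_of_mem he]
    omega
  have hNmatch : IsMatching T N := by
    constructor
    · intro f hf
      simp only [hN, Finset.coe_insert, Set.mem_insert_iff, Finset.mem_coe] at hf
      rcases hf with rfl | rfl | hf
      · exact T.mem_edgeSet.mpr hup
      · exact T.mem_edgeSet.mpr hvq
      · exact hM.1.1 (Finset.mem_of_mem_erase hf)
    · intro f hf g hg hfg w ⟨hwf, hwg⟩
      have hkey : ∀ g' ∈ M.erase s(u, v), w ∈ g' → (w ∈ s(u, p) ∨ w ∈ s(v, q)) → False := by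
        intro g' hg' hwg' hw
        have hgM : g' ∈ M := Finset.mem_of_mem_erase hg'
        have hgne : g' ≠ s(u, v) := Finset.ne_of_mem_erase hg'
        rcases hw with hw | hw <;> rw [Sym2.mem_iff] at hw
        · rcases hw with rfl | rfl
          · exact hM.1.2 _ hgM _ he hgne w ⟨hwg', Sym2.mem_mk_left _ _⟩
          · exact hMp _ hgM hwg'
        · rcases hw with rfl | rfl
          · exact hM.1.2 _ hgM _ he hgne w ⟨hwg', Sym2.mem_mk_right _ _⟩
          · exact hMq _ hgM hwg'
      have hdisj : w ∈ s(u, p) → w ∈ s(v, q) → False := by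
        intro h1 h2
        rw [Sym2.mem_iff] at h1 h2
        rcases h1 with rfl | rfl <;> rcases h2 with h | h
        · exact hne_uv h
        · exact hqu h.symm
        · exact hpv h
        · exact hpq h
      simp only [hN, Finset.mem_insert] at hf hg
      rcases hf with rfl | rfl | hf <;> rcases hg with rfl | rfl | hg
      · exact hfg rfl
      · exact hdisj hwf hwg
      · exact hkey _ hg hwg (Or.inl hwf)
      · exact hdisj hwg hwf
      · exact hfg rfl
      · exact hkey _ hg hwg (Or.inr hwf)
      · exact hkey _ hf hwf (Or.inl hwg)
      · exact hkey _ hf hwf (Or.inr hwg)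
      · exact hM.1.2 _ (Finset.mem_of_mem_erase hf) _ (Finset.mem_of_mem_erase hg) hfg w ⟨hwf, hwg⟩
  have := hM.2 N hNmatch
  omega
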